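/- Any two triangulations of a convex polygon (dissections of an (n+2)-gon into triangles by non-crossing diagonals) are connected by a sequence of diagonal flips. -/

import Mathlib

namespace PolygonFlips

variable (m : ℕ)

/-- A diagonal of the convex `m`-gon with vertices `0, 1, …, m-1` in convex
position: an ordered pair `(a, b)` with `a < b`, joining non-adjacent vertices. -/
def IsDiagonal (e : Fin m × Fin m) : Prop :=
  e.1.val + 2 ≤ e.2.val ∧ ¬(e.1.val = 0 ∧ e.2.val + 1 = m)

/-- Two diagonals of a convex polygon cross iff their endpoints interlace along
the boundary circle. -/
def Crosses (e f : Fin m × Fin m) : Prop :=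
  (e.1.val < f.1.val ∧ f.1.val < e.2.val ∧ e.2.val < f.2.val) ∨
  (f.1.val < e.1.val ∧ e.1.val < f.2.val ∧ f.2.val < e.2.val)

/-- A triangulation of the convex `m`-gon: a maximal set of pairwise
non-crossing diagonals. -/
def IsTriangulation (D : Finset (Fin m × Fin m)) : Prop :=
  (∀ e ∈ D, IsDiagonal m e) ∧
  (∀ e ∈ D, ∀ f ∈ D, ¬ Crosses m e f) ∧
  (∀ e, IsDiagonal m e → e ∉ D → ∃ f ∈ D, Crosses m e f ∨ Crosses m f e)

/-- A flip: remove one diagonal and insert another one so that the result is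
again a triangulation. -/
def Flip (D D' : Finset (Fin m × Fin m)) : Prop :=
  ∃ d d', d ∈ D ∧ d' ∉ D ∧ D' = insert d' (D.erase d) ∧ IsTriangulation m D'


noncomputable def Fan : Finset (Fin m × Fin m) :=
  @Finset.filter _ (fun e => e.1.val = 0 ∧ IsDiagonal m e) (Classical.decPred _) Finset.univ

lemma mem_Fan {e : Fin m × Fin m} : e ∈ Fan m ↔ e.1.val = 0 ∧ IsDiagonal m e := by
  simp [Fan]

lemma fan_tri : IsTriangulation m (Fan m) := by
  refine ⟨fun e he => ((mem_Fan m).1 he).2, ?_, ?_⟩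
  · intro e he f hf
    have h1 := ((mem_Fan m).1 he).1
    have h2 := ((mem_Fan m).1 hf).1
    simp only [Crosses]
    omega
  · intro e hdiag he
    rcases e with ⟨⟨x, hx⟩, ⟨y, hy⟩⟩
    obtain ⟨h1, h2⟩ := hdiag
    simp only [Fin.val_mk] at h1 h2
    have hx0 : x ≠ 0 := by
      intro h
      exact he ((mem_Fan m).2 ⟨h, ⟨h1, h2⟩⟩)
    have hx1m : x + 1 < m := by omega
    refine ⟨(⟨0, by omega⟩, ⟨x + 1, hx1m⟩), (mem_Fan m).2 ⟨rfl, ⟨?_, ?_⟩⟩, ?_⟩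
    · simp only [Fin.val_mk]; omega
    · simp only [Fin.val_mk]; omega
    · right
      left
      refine ⟨?_, ?_, ?_⟩ <;> simp only [Fin.val_mk] <;> omega

lemma eq_fan (D : Finset (Fin m × Fin m)) (hD : IsTriangulation m D)
    (h : ∀ e ∈ D, e.1.val = 0) : D = Fan m := by
  apply Finset.Subset.antisymm
  · intro e he
    exact (mem_Fan m).2 ⟨h e he, hD.1 e he⟩
  · intro e he
    by_contra hne
    obtain ⟨f, hf, hcr⟩ := hD.2.2 e ((mem_Fan m).1 he).2 hne
    have h1 := ((mem_Fan m).1 he).1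
    have h2 := h f hf
    simp only [Crosses] at hcr
    omega

lemma step (D : Finset (Fin m × Fin m)) (hD : IsTriangulation m D)
    (e0 : Fin m × Fin m) (he0 : e0 ∈ D) (h00 : e0.1.val ≠ 0) :
    ∃ D', Flip m D D' ∧
      (D'.filter fun f => f.1.val ≠ 0).card < (D.filter fun f => f.1.val ≠ 0).card := by
  classical
  have hm0 : 0 < m := e0.1.pos
  -- neighbours of vertex 0
  set nbr : ℕ → Prop := fun k => k = 1 ∨ k + 1 = m ∨ ∃ hk : k < m,
      ((⟨0, hm0⟩ : Fin m), (⟨k, hk⟩ : Fin m)) ∈ D with hnbr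
  obtain ⟨hx2y, hnd0⟩ := hD.1 e0 he0
  have hy0 : e0.2.val < m := e0.2.isLt
  set c : ℕ := e0.1.val + 1 with hc
  have hc2 : 2 ≤ c := by omega
  have hc1m : c + 1 < m := by omega
  have hcnot : ¬ nbr c := by
    rintro (h | h | ⟨hk, hmem⟩)
    · omega
    · omega
    · refine hD.2.1 _ hmem e0 he0 ?_
      left
      simp only [Fin.val_mk]
      omega
  -- the gap neighbours a < b
  obtain ⟨a, b, ha1, hab2, hbm, hnbra, hnbrb, hgap⟩ :
      ∃ a b, 1 ≤ a ∧ a + 2 ≤ b ∧ b < m ∧ nbr a ∧ nbr b ∧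
        (∀ k, a < k → k < b → ¬ nbr k) := by
    have h1le : 1 ≤ c := by omega
    have hnbr1 : nbr 1 := Or.inl rfl
    have hnbra : nbr (Nat.findGreatest nbr c) := Nat.findGreatest_spec h1le hnbr1
    have ha1 : 1 ≤ Nat.findGreatest nbr c := Nat.le_findGreatest h1le hnbr1
    have hac : Nat.findGreatest nbr c ≤ c := Nat.findGreatest_le c
    have hane : Nat.findGreatest nbr c ≠ c := fun h => hcnot (h ▸ hnbra)
    have hex : ∃ k, nbr k ∧ c < k := ⟨m - 1, Or.inr (Or.inl (by omega)), by omega⟩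
    have hnbrb : nbr (Nat.find hex) := (Nat.find_spec hex).1
    have hcb : c < Nat.find hex := (Nat.find_spec hex).2
    have hble : Nat.find hex ≤ m - 1 :=
      Nat.find_min' hex ⟨Or.inr (Or.inl (by omega)), by omega⟩
    refine ⟨Nat.findGreatest nbr c, Nat.find hex, ha1, by omega, by omega,
      hnbra, hnbrb, ?_⟩
    intro k h1 h2 hn
    rcases le_or_gt k c with h | h
    · exact Nat.findGreatest_is_greatest h1 h hn
    · exact Nat.find_min hex h2 ⟨hn, h⟩
  have ham : a < m := by omega
  -- membership facts for (0,a), (0,b)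
  have h0a : a ≠ 1 → ((⟨0, hm0⟩ : Fin m), (⟨a, ham⟩ : Fin m)) ∈ D := by
    intro hne1
    rcases hnbra with h | h | ⟨hk, hmem⟩
    · exact absurd h hne1
    · omega
    · exact hmem
  have h0b : b + 1 ≠ m → ((⟨0, hm0⟩ : Fin m), (⟨b, hbm⟩ : Fin m)) ∈ D := by
    intro hne1
    rcases hnbrb with h | h | ⟨hk, hmem⟩
    · omega
    · exact absurd h hne1
    · exact hmem
  set dab : Fin m × Fin m := ((⟨a, ham⟩ : Fin m), (⟨b, hbm⟩ : Fin m)) with hdabdef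
  have hdabdiag : IsDiagonal m dab := ⟨by simp only [hdabdef, Fin.val_mk]; omega,
    by simp only [hdabdef, Fin.val_mk]; omega⟩
  -- Step 1 : dab ∈ D
  have hdab : dab ∈ D := by
    by_contra hnot
    obtain ⟨f, hf, hcr⟩ := hD.2.2 dab hdabdiag hnot
    have hcr' : (a < f.1.val ∧ f.1.val < b ∧ b < f.2.val) ∨
        (f.1.val < a ∧ a < f.2.val ∧ f.2.val < b) := by
      simp only [Crosses, hdabdef, Fin.val_mk] at hcr
      omega
    have hym : f.2.val < m := f.2.isLt
    rcases hcr' with ⟨h1, h2, h3⟩ | ⟨h1, h2, h3⟩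
    · have hmem := h0b (by omega)
      refine hD.2.1 _ hmem f hf ?_
      left
      simp only [Fin.val_mk]
      omega
    · rcases Nat.eq_zero_or_pos f.1.val with hx0 | hx0
      · have hfe : f = ((⟨0, hm0⟩ : Fin m), (⟨f.2.val, hym⟩ : Fin m)) := by
          rcases f with ⟨⟨x', _⟩, ⟨y', _⟩⟩
          simp only [Prod.mk.injEq, Fin.mk.injEq]
          exact ⟨by simpa using hx0, by simp⟩
        exact hgap f.2.val h2 h3 (Or.inr (Or.inr ⟨hym, hfe ▸ hf⟩))
      · have hmem := h0a (by omega)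
        refine hD.2.1 _ hmem f hf ?_
        left
        simp only [Fin.val_mk]
        omega
  -- Step 2 : find t, the apex of the triangle below (a,b)
  have hkey : ∃ t, a < t ∧ t < b ∧ ∀ f ∈ D, f ≠ dab →
      ¬(a ≤ f.1.val ∧ f.1.val < t ∧ t < f.2.val ∧ f.2.val ≤ b) := by
    set S : Finset (Fin m × Fin m) :=
      D.filter (fun f => a ≤ f.1.val ∧ f.2.val ≤ b ∧ f ≠ dab) with hS
    rcases S.eq_empty_or_nonempty with hSe | hSne
    · refine ⟨a + 1, by omega, by omega, ?_⟩
      rintro f hf hne ⟨hh1, hh2, hh3, hh4⟩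
      have : f ∈ S := Finset.mem_filter.2 ⟨hf, hh1, hh4, hne⟩
      simp [hSe] at this
    · obtain ⟨f0, hf0S, hmax⟩ := S.exists_max_image (fun f => f.2.val - f.1.val) hSne
      obtain ⟨hf0D, hax0, hy0b, hf0ne⟩ := Finset.mem_filter.1 hf0S
      set x0 := f0.1.val with hx0def
      set y0 := f0.2.val with hy0def
      have hdiag0 : x0 + 2 ≤ y0 := (hD.1 f0 hf0D).1
      rcases eq_or_lt_of_le hax0 with hax0' | hax0'
      · -- x0 = a, take t = y0
        have hy0ltb : y0 < b := by
          rcases eq_or_lt_of_le hy0b with h | h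
          · exfalso
            apply hf0ne
            rcases f0 with ⟨⟨u, hu⟩, ⟨v, hv⟩⟩
            simp only [hdabdef, Prod.mk.injEq, Fin.mk.injEq]
            exact ⟨hax0'.symm, h⟩
          · exact h
        refine ⟨y0, by omega, hy0ltb, ?_⟩
        rintro f hf hne ⟨hh1, hh2, hh3, hh4⟩
        have hnc := hD.2.1 f0 hf0D f hf
        simp only [Crosses, ← hx0def, ← hy0def] at hnc
        push_neg at hnc
        -- f1 must equal a
        have hf1a : f.1.val = a := by
          rcases lt_or_ge (f.1.val) y0 with h | h
          · rcases lt_or_ge x0 (f.1.val) with h2 | h2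
            · exact absurd (hnc.1 h2 h) (by omega)
            · omega
          · omega
        have hfS : f ∈ S := Finset.mem_filter.2 ⟨hf, by omega, by omega, hne⟩
        have := hmax f hfS
        omega
      · -- a < x0, take t = x0
        refine ⟨x0, hax0', by omega, ?_⟩
        rintro f hf hne ⟨hh1, hh2, hh3, hh4⟩
        have hnc := hD.2.1 f hf f0 hf0D
        simp only [Crosses, ← hx0def, ← hy0def] at hnc
        push_neg at hnc
        have hy0f2 : y0 ≤ f.2.val := by
          rcases lt_or_ge (f.2.val) y0 with h | h
          · exact absurd (hnc.1 hh2 hh3) (by omega)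
          · exact h
        have hfS : f ∈ S := Finset.mem_filter.2 ⟨hf, hh1, hh4, hne⟩
        have := hmax f hfS
        omega
  obtain ⟨t, hat, htb, hstar⟩ := hkey
  have htm : t < m := by omega
  -- (0,t) is not in D
  have h0tD : ((⟨0, hm0⟩ : Fin m), (⟨t, htm⟩ : Fin m)) ∉ D := by
    intro hmem
    exact hgap t hat htb (Or.inr (Or.inr ⟨htm, hmem⟩))
  set d0t : Fin m × Fin m := ((⟨0, hm0⟩ : Fin m), (⟨t, htm⟩ : Fin m)) with hd0tdef
  -- (A): nothing in D, except dab, crosses (0,t)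
  have hA : ∀ f ∈ D, f ≠ dab → ¬(0 < f.1.val ∧ f.1.val < t ∧ t < f.2.val) := by
    rintro f hf hne ⟨h1, h2, h3⟩
    have hf2m : f.2.val < m := f.2.isLt
    have hf1a : a ≤ f.1.val := by
      by_contra hlt
      push_neg at hlt
      rcases eq_or_ne a 1 with ha' | ha'
      · omega
      · refine hD.2.1 _ (h0a ha') f hf ?_
        left
        simp only [Fin.val_mk]
        omega
    have hf2b : f.2.val ≤ b := by
      by_contra hlt
      push_neg at hlt
      refine hD.2.1 _ (h0b (by omega)) f hf ?_
      left
      simp only [Fin.val_mk]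
      omega
    exact hstar f hf hne ⟨hf1a, h2, h3, hf2b⟩
  -- (B): the edge (a,t)
  have hB : a + 1 < t → ((⟨a, ham⟩ : Fin m), (⟨t, htm⟩ : Fin m)) ∈ D := by
    intro h
    by_contra hnot
    have hdiag : IsDiagonal m ((⟨a, ham⟩ : Fin m), (⟨t, htm⟩ : Fin m)) :=
      ⟨by simp only [Fin.val_mk]; omega, by simp only [Fin.val_mk]; omega⟩
    obtain ⟨g, hg, hcr⟩ := hD.2.2 _ hdiag hnot
    have hcr' : (a < g.1.val ∧ g.1.val < t ∧ t < g.2.val) ∨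
        (g.1.val < a ∧ a < g.2.val ∧ g.2.val < t) := by
      simp only [Crosses, Fin.val_mk] at hcr
      omega
    rcases hcr' with ⟨h1, h2, h3⟩ | ⟨h1, h2, h3⟩
    · have hgne : g ≠ dab := by
        intro he
        rw [he, hdabdef] at h1
        simp only [Fin.val_mk] at h1
        omega
      rcases le_or_gt g.2.val b with h4 | h4
      · exact hstar g hg hgne ⟨by omega, h2, h3, h4⟩
      · refine hD.2.1 dab hdab g hg ?_
        left
        simp only [hdabdef, Fin.val_mk]
        omega
    · refine hD.2.1 g hg dab hdab ?_
      left
      simp only [hdabdef, Fin.val_mk]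
      omega
  -- (C): the edge (t,b)
  have hC : t + 1 < b → ((⟨t, htm⟩ : Fin m), (⟨b, hbm⟩ : Fin m)) ∈ D := by
    intro h
    by_contra hnot
    have hdiag : IsDiagonal m ((⟨t, htm⟩ : Fin m), (⟨b, hbm⟩ : Fin m)) :=
      ⟨by simp only [Fin.val_mk]; omega, by simp only [Fin.val_mk]; omega⟩
    obtain ⟨g, hg, hcr⟩ := hD.2.2 _ hdiag hnot
    have hcr' : (t < g.1.val ∧ g.1.val < b ∧ b < g.2.val) ∨
        (g.1.val < t ∧ t < g.2.val ∧ g.2.val < b) := by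
      simp only [Crosses, Fin.val_mk] at hcr
      omega
    rcases hcr' with ⟨h1, h2, h3⟩ | ⟨h1, h2, h3⟩
    · refine hD.2.1 dab hdab g hg ?_
      left
      simp only [hdabdef, Fin.val_mk]
      omega
    · rcases lt_or_ge g.1.val a with h4 | h4
      · refine hD.2.1 g hg dab hdab ?_
        left
        simp only [hdabdef, Fin.val_mk]
        omega
      · have hgne : g ≠ dab := by
          intro he
          rw [he, hdabdef] at h3
          simp only [Fin.val_mk] at h3
          omega
        exact hstar g hg hgne ⟨h4, h1, h2, by omega⟩
  -- the new triangulation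
  have hd0tdiag : IsDiagonal m d0t :=
    ⟨by simp only [hd0tdef, Fin.val_mk]; omega, by simp only [hd0tdef, Fin.val_mk]; omega⟩
  set D' := insert d0t (D.erase dab) with hD'def
  have htri : IsTriangulation m D' := by
    refine ⟨?_, ?_, ?_⟩
    · intro e he
      rcases Finset.mem_insert.1 he with rfl | he'
      · exact hd0tdiag
      · exact hD.1 e (Finset.mem_of_mem_erase he')
    · intro e he f hf
      rcases Finset.mem_insert.1 he with rfl | he' <;>
        rcases Finset.mem_insert.1 hf with rfl | hf'
      · simp only [Crosses, hd0tdef, Fin.val_mk]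
        omega
      · have := hA f (Finset.mem_of_mem_erase hf') (Finset.ne_of_mem_erase hf')
        simp only [Crosses, hd0tdef, Fin.val_mk]
        omega
      · have := hA e (Finset.mem_of_mem_erase he') (Finset.ne_of_mem_erase he')
        simp only [Crosses, hd0tdef, Fin.val_mk]
        omega
      · exact hD.2.1 e (Finset.mem_of_mem_erase he') f (Finset.mem_of_mem_erase hf')
    · intro e hediag hne'
      by_cases hedab : e = dab
      · subst hedab
        refine ⟨d0t, Finset.mem_insert_self _ _, Or.inr ?_⟩
        simp only [Crosses, hd0tdef, hdabdef, Fin.val_mk]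
        omega
      · have heD : e ∉ D := fun heD =>
          hne' (Finset.mem_insert_of_mem (Finset.mem_erase.2 ⟨hedab, heD⟩))
        obtain ⟨f, hf, hcr⟩ := hD.2.2 e hediag heD
        by_cases hfdab : f = dab
        · subst hfdab
          have hcr' : (e.1.val < a ∧ a < e.2.val ∧ e.2.val < b) ∨
              (a < e.1.val ∧ e.1.val < b ∧ b < e.2.val) := by
            simp only [Crosses, hdabdef, Fin.val_mk] at hcr
            omega
          have hed0t : e ≠ d0t := by
            intro he
            rw [he] at hne'
            exact hne' (Finset.mem_insert_self _ _)
          have he2m : e.2.val < m := e.2.isLt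
          rcases hcr' with ⟨h1, h2, h3⟩ | ⟨h1, h2, h3⟩
          · -- Case II : e1 < a < e2 < b
            rcases lt_trichotomy e.2.val t with h4 | h4 | h4
            · have hmem := hB (by omega)
              refine ⟨_, Finset.mem_insert_of_mem (Finset.mem_erase.2 ⟨?_, hmem⟩),
                Or.inl ?_⟩
              · intro he
                rw [hdabdef] at he
                simp only [Prod.mk.injEq, Fin.mk.injEq] at he
                omega
              · simp only [Crosses, Fin.val_mk]
                omega
            · rcases Nat.eq_zero_or_pos e.1.val with h5 | h5
              · exfalso
                apply hed0t
                rcases e with ⟨⟨u, hu⟩, ⟨v, hv⟩⟩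
                rw [hd0tdef]
                simp only [Prod.mk.injEq, Fin.mk.injEq]
                exact ⟨by simpa using h5, by simpa using h4⟩
              · refine ⟨_, Finset.mem_insert_of_mem
                  (Finset.mem_erase.2 ⟨?_, h0a (by omega)⟩), Or.inr ?_⟩
                · intro he
                  rw [hdabdef] at he
                  simp only [Prod.mk.injEq, Fin.mk.injEq] at he
                  omega
                · simp only [Crosses, Fin.val_mk]
                  omega
            · have hmem := hC (by omega)
              refine ⟨_, Finset.mem_insert_of_mem (Finset.mem_erase.2 ⟨?_, hmem⟩),
                Or.inl ?_⟩
              · intro he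
                rw [hdabdef] at he
                simp only [Prod.mk.injEq, Fin.mk.injEq] at he
                omega
              · simp only [Crosses, Fin.val_mk]
                omega
          · -- Case I : a < e1 < b < e2
            rcases lt_trichotomy e.1.val t with h4 | h4 | h4
            · refine ⟨d0t, Finset.mem_insert_self _ _, Or.inr ?_⟩
              simp only [Crosses, hd0tdef, Fin.val_mk]
              omega
            · refine ⟨_, Finset.mem_insert_of_mem
                (Finset.mem_erase.2 ⟨?_, h0b (by omega)⟩), Or.inr ?_⟩
              · intro he
                rw [hdabdef] at he
                simp only [Prod.mk.injEq, Fin.mk.injEq] at he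
                omega
              · simp only [Crosses, Fin.val_mk]
                omega
            · have hmem := hC (by omega)
              refine ⟨_, Finset.mem_insert_of_mem (Finset.mem_erase.2 ⟨?_, hmem⟩),
                Or.inr ?_⟩
              · intro he
                rw [hdabdef] at he
                simp only [Prod.mk.injEq, Fin.mk.injEq] at he
                omega
              · simp only [Crosses, Fin.val_mk]
                omega
        · exact ⟨f, Finset.mem_insert_of_mem (Finset.mem_erase.2 ⟨hfdab, hf⟩), hcr⟩
  refine ⟨D', ⟨dab, d0t, hdab, h0tD, hD'def, htri⟩, ?_⟩
  have hfe : D'.filter (fun f => f.1.val ≠ 0) = (D.filter fun f => f.1.val ≠ 0).erase dab := by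
    rw [hD'def, Finset.filter_insert, if_neg (by simp [hd0tdef]), Finset.filter_erase]
  rw [hfe]
  apply Finset.card_erase_lt_of_mem
  refine Finset.mem_filter.2 ⟨hdab, ?_⟩
  rw [hdabdef]
  simp only [Fin.val_mk]
  omega


lemma toFan (D : Finset (Fin m × Fin m)) (hD : IsTriangulation m D) :
    Relation.ReflTransGen (Flip m) D (Fan m) := by
  generalize hn : (D.filter fun f => f.1.val ≠ 0).card = n
  induction n using Nat.strong_induction_on generalizing D with
  | _ n ih =>
    rcases Nat.eq_zero_or_pos n with h0 | hpos
    · have hall : ∀ e ∈ D, e.1.val = 0 := by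
        intro e he
        by_contra hne
        have hmem : e ∈ D.filter fun f => f.1.val ≠ 0 := Finset.mem_filter.2 ⟨he, hne⟩
        have := Finset.card_pos.2 ⟨e, hmem⟩
        omega
      rw [eq_fan m D hD hall]
    · have hne : (D.filter fun f => f.1.val ≠ 0).Nonempty := Finset.card_pos.1 (by omega)
      obtain ⟨e0, he0⟩ := hne
      obtain ⟨D', hflip, hcard⟩ :=
        step m D hD e0 (Finset.mem_filter.1 he0).1 (Finset.mem_filter.1 he0).2
      obtain ⟨d, d', hd, hd', hEq, htri⟩ := hflip
      exact Relation.ReflTransGen.head ⟨d, d', hd, hd', hEq, htri⟩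
        (ih _ (by omega) D' htri rfl)

lemma flip_symm {D D' : Finset (Fin m × Fin m)} (hD : IsTriangulation m D)
    (h : Flip m D D') : Flip m D' D := by
  obtain ⟨d, d', hd, hd', rfl, htri⟩ := h
  have hdd' : d ≠ d' := fun h => hd' (h ▸ hd)
  refine ⟨d', d, Finset.mem_insert_self _ _, ?_, ?_, hD⟩
  · simp only [Finset.mem_insert, Finset.mem_erase]
    push_neg
    exact ⟨hdd', fun h => absurd rfl h⟩
  · rw [Finset.erase_insert (fun h => hd' (Finset.mem_of_mem_erase h)),
      Finset.insert_erase hd]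

lemma rtg_symm {D E : Finset (Fin m × Fin m)}
    (h : Relation.ReflTransGen (Flip m) D E) :
    IsTriangulation m D → Relation.ReflTransGen (Flip m) E D := by
  induction h using Relation.ReflTransGen.head_induction_on with
  | refl => exact fun _ => .refl
  | head hstep _ ih =>
    intro hA
    obtain ⟨_, _, _, _, rfl, htri⟩ := hstep
    exact (ih htri).tail (flip_symm m hA ⟨_, _, ‹_›, ‹_›, rfl, htri⟩)

/-- Any two triangulations of a convex polygon are connected by a sequence of
diagonal flips: the flip graph is connected. -/
theorem flip_graph_connected (hm : 3 ≤ m) (D D' : Finset (Fin m × Fin m))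
    (hD : IsTriangulation m D) (hD' : IsTriangulation m D') :
    Relation.ReflTransGen (Flip m) D D' :=
  (toFan m D hD).trans (rtg_symm m (toFan m D' hD') hD')

end PolygonFlips
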